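/- Let G be a split graph with split partition (C, I) and let 𝒳 be a multiset of k pairs of distinct vertices of G. If |C| > k and every terminal vertex v has degree at least the number of occurrences of terminal pairs of 𝒳 containing v, then (G,𝒳,k) is a Yes-instance of EDP. -/

import Mathlib

open SimpleGraph Finset

/-- A family of walks in `G` connecting the terminal pairs `X`. -/
abbrev WalkFamily {V : Type*} (G : SimpleGraph V) {ι : Type*} (X : ι → V × V) :=
  ∀ i : ι, G.Walk (X i).1 (X i).2

/-- The walks in the family are pairwise edge-disjoint. -/
def PairwiseEdgeDisjoint {V : Type*} (G : SimpleGraph V) {ι : Type*} (X : ι → V × V)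
    (P : WalkFamily G X) : Prop :=
  ∀ i j : ι, i ≠ j → ∀ e : Sym2 V, e ∈ (P i).edges → e ∉ (P j).edges

/-- A solution of the Edge-Disjoint Paths (EDP) instance `(G, X)`: a family of paths
connecting the terminal pairs that are pairwise edge-disjoint. -/
def IsEDPSolution {V : Type*} (G : SimpleGraph V) {ι : Type*} (X : ι → V × V)
    (P : WalkFamily G X) : Prop :=
  (∀ i, (P i).IsPath) ∧ PairwiseEdgeDisjoint G X P

/-- `(G, X)` is a Yes-instance of EDP. -/
def EDPYes {V : Type*} (G : SimpleGraph V) {ι : Type*} (X : ι → V × V) : Prop :=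
  ∃ P : WalkFamily G X, IsEDPSolution G X P

/-- `(C, I)` is a split partition of `G`: `V(G)` is the disjoint union of `C` and `I`,
`C` induces a clique, and `I` is an independent set. -/
def IsSplitPartition {V : Type*} (G : SimpleGraph V) (C I : Finset V) : Prop :=
  (∀ x : V, x ∈ C ∨ x ∈ I) ∧ (∀ x : V, ¬ (x ∈ C ∧ x ∈ I)) ∧
  (∀ x ∈ C, ∀ y ∈ C, x ≠ y → G.Adj x y) ∧ (∀ x ∈ I, ∀ y ∈ I, ¬ G.Adj x y)

private lemma edp_clique_linkage {V : Type*} [DecidableEq V] (G : SimpleGraph V) :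
    ∀ (k : ℕ) (C : Finset V), k < C.card →
      (∀ x ∈ C, ∀ y ∈ C, x ≠ y → G.Adj x y) →
      ∀ a b : Fin k → V, (∀ i, a i ∈ C) → (∀ i, b i ∈ C) →
      ∃ Q : ∀ i : Fin k, G.Walk (a i) (b i),
        (∀ i, (Q i).IsPath) ∧ (∀ i, ∀ x ∈ (Q i).support, x ∈ C) ∧
        (∀ i j, i ≠ j → ∀ e ∈ (Q i).edges, e ∉ (Q j).edges) := by
  intro k
  induction k with
  | zero =>
    intro C _ _ a b _ _
    exact ⟨fun i => i.elim0, fun i => i.elim0, fun i => i.elim0, fun i j h => i.elim0⟩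
  | succ k IH =>
    intro C hk hcl a b ha hb
    classical
    -- find a vertex z in C contained in at most one demand
    have hzex : ∃ z ∈ C, (univ.filter (fun i : Fin (k+1) => a i = z ∨ b i = z)).card ≤ 1 := by
      by_contra hcon
      push_neg at hcon
      have key : ∑ z ∈ C, (univ.filter (fun i : Fin (k+1) => a i = z ∨ b i = z)).card
          ≤ 2 * (k+1) := by
        calc ∑ z ∈ C, (univ.filter (fun i : Fin (k+1) => a i = z ∨ b i = z)).card
            = ∑ z ∈ C, ∑ i : Fin (k+1), if a i = z ∨ b i = z then 1 else 0 :=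
              Finset.sum_congr rfl fun z _ => Finset.card_filter _ _
          _ = ∑ i : Fin (k+1), ∑ z ∈ C, if a i = z ∨ b i = z then 1 else 0 :=
              Finset.sum_comm
          _ = ∑ i : Fin (k+1), (C.filter (fun z => a i = z ∨ b i = z)).card :=
              Finset.sum_congr rfl fun i _ => (Finset.card_filter _ _).symm
          _ ≤ ∑ _i : Fin (k+1), 2 := by
              refine Finset.sum_le_sum fun i _ => ?_
              have hsub : C.filter (fun z => a i = z ∨ b i = z) ⊆ {a i, b i} := by
                intro z hz
                simp only [Finset.mem_filter] at hz
                simp only [Finset.mem_insert, Finset.mem_singleton]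
                rcases hz.2 with h | h
                · exact Or.inl h.symm
                · exact Or.inr h.symm
              calc (C.filter (fun z => a i = z ∨ b i = z)).card
                  ≤ ({a i, b i} : Finset V).card := Finset.card_le_card hsub
                _ ≤ 2 := by
                    refine (Finset.card_insert_le _ _).trans ?_
                    simp
          _ = 2 * (k+1) := by simp [mul_comm]
      have hge : 2 * C.card ≤ ∑ z ∈ C, (univ.filter (fun i : Fin (k+1) => a i = z ∨ b i = z)).card := by
        calc 2 * C.card = ∑ _z ∈ C, 2 := by simp [mul_comm]
          _ ≤ _ := Finset.sum_le_sum fun z hz => hcon z hz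
      omega
    obtain ⟨z, hzC, hz1⟩ := hzex
    -- the special index i0 (the unique demand containing z, if any)
    set i0 : Fin (k+1) := if h : ∃ i : Fin (k+1), a i = z ∨ b i = z then h.choose else 0 with hi0
    have F1 : ∀ j : Fin (k+1), j ≠ i0 → a j ≠ z ∧ b j ≠ z := by
      intro j hj
      by_contra hcc
      have hor : a j = z ∨ b j = z := by tauto
      have hex : ∃ i : Fin (k+1), a i = z ∨ b i = z := ⟨j, hor⟩
      have hi0spec : a i0 = z ∨ b i0 = z := by
        rw [hi0, dif_pos hex]; exact hex.choose_spec
      have hjmem : j ∈ univ.filter (fun i : Fin (k+1) => a i = z ∨ b i = z) := by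
        simp [hor]
      have hi0mem : i0 ∈ univ.filter (fun i : Fin (k+1) => a i = z ∨ b i = z) := by
        simp [hi0spec]
      exact hj (Finset.card_le_one.mp hz1 j hjmem i0 hi0mem)
    set σ : Equiv.Perm (Fin (k+1)) := Equiv.swap i0 (Fin.last k) with hσ
    have hσlast : σ (Fin.last k) = i0 := Equiv.swap_apply_right i0 (Fin.last k)
    have hσcs : ∀ i : Fin k, σ i.castSucc ≠ i0 := by
      intro i hcon
      have : i.castSucc = Fin.last k := by
        apply σ.injective
        rw [hcon, hσlast]
      exact absurd this (Fin.ne_of_lt (Fin.castSucc_lt_last i))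
    set C' := C.erase z with hC'
    have hC'card : k < C'.card := by
      rw [hC', Finset.card_erase_of_mem hzC]; omega
    have hC'sub : C' ⊆ C := Finset.erase_subset _ _
    have hcl' : ∀ x ∈ C', ∀ y ∈ C', x ≠ y → G.Adj x y :=
      fun x hx y hy => hcl x (hC'sub hx) y (hC'sub hy)
    have hA : ∀ i : Fin k, a (σ i.castSucc) ∈ C' := by
      intro i
      rw [hC', Finset.mem_erase]
      exact ⟨(F1 _ (hσcs i)).1, ha _⟩
    have hB : ∀ i : Fin k, b (σ i.castSucc) ∈ C' := by
      intro i
      rw [hC', Finset.mem_erase]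
      exact ⟨(F1 _ (hσcs i)).2, hb _⟩
    obtain ⟨Q', hQ'p, hQ's, hQ'd⟩ := IH C' hC'card hcl'
      (fun i => a (σ i.castSucc)) (fun i => b (σ i.castSucc)) hA hB
    -- the special walk
    have W0ex : ∃ W0 : G.Walk (a i0) (b i0),
        W0.IsPath ∧ (∀ x ∈ W0.support, x ∈ C) ∧ (∀ e ∈ W0.edges, z ∈ e) := by
      by_cases hab : a i0 = b i0
      · refine ⟨Walk.nil.copy rfl hab, ?_, ?_, ?_⟩
        · simp
        · intro x hx
          rw [Walk.support_copy, Walk.support_nil] at hx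
          simp only [List.mem_singleton] at hx
          subst hx; exact ha i0
        · simp
      · by_cases hz0 : z = a i0 ∨ z = b i0
        · refine ⟨Walk.cons (hcl _ (ha i0) _ (hb i0) hab) Walk.nil, ?_, ?_, ?_⟩
          · simp [hab]
          · intro x hx
            simp only [Walk.support_cons, Walk.support_nil, List.mem_cons,
              List.mem_singleton, List.not_mem_nil, or_false] at hx
            rcases hx with rfl | rfl
            · exact ha i0
            · exact hb i0
          · intro e he
            simp only [Walk.edges_cons, Walk.edges_nil, List.mem_singleton,
              List.not_mem_nil, or_false] at he
            subst he
            rw [Sym2.mem_iff]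
            tauto
        · push_neg at hz0
          refine ⟨Walk.cons (hcl _ (ha i0) _ hzC (Ne.symm hz0.1))
            (Walk.cons (hcl _ hzC _ (hb i0) hz0.2) Walk.nil), ?_, ?_, ?_⟩
          · rw [Walk.isPath_def]
            simp only [Walk.support_cons, Walk.support_nil]
            simp [hab, Ne.symm hz0.1, hz0.2]
          · intro x hx
            simp only [Walk.support_cons, Walk.support_nil, List.mem_cons,
              List.not_mem_nil, or_false] at hx
            rcases hx with rfl | rfl | rfl
            · exact ha i0
            · exact hzC
            · exact hb i0
          · intro e he
            simp only [Walk.edges_cons, Walk.edges_nil, List.mem_cons,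
              List.not_mem_nil, or_false] at he
            rcases he with rfl | rfl <;> simp
    obtain ⟨W0, hW0p, hW0s, hW0z⟩ := W0ex
    have h1 : a i0 = a (σ (Fin.last k)) := by rw [hσlast]
    have h2 : b i0 = b (σ (Fin.last k)) := by rw [hσlast]
    set R : ∀ j : Fin (k+1), G.Walk (a (σ j)) (b (σ j)) :=
      Fin.lastCases (W0.copy h1 h2) (fun i => Q' i) with hR
    have hRlast : R (Fin.last k) = W0.copy h1 h2 := by
      rw [hR]; exact Fin.lastCases_last
    have hRcast : ∀ i : Fin k, R i.castSucc = Q' i := by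
      intro i; rw [hR]; exact Fin.lastCases_castSucc i
    -- z is not on any Q' walk
    have hQ'z : ∀ (i : Fin k) (e : Sym2 V), e ∈ (Q' i).edges → z ∉ e := by
      intro i e he hz
      induction e using Sym2.ind with
      | _ u v =>
        rw [Sym2.mem_iff] at hz
        have hmem : z ∈ (Q' i).support := by
          rcases hz with rfl | rfl
          · exact Walk.fst_mem_support_of_mem_edges _ he
          · exact Walk.snd_mem_support_of_mem_edges _ he
        have := hQ's i z hmem
        rw [hC', Finset.mem_erase] at this
        exact this.1 rfl
    refine ⟨fun i => (R (σ.symm i)).copy (congrArg a (σ.apply_symm_apply i))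
        (congrArg b (σ.apply_symm_apply i)), ?_, ?_, ?_⟩
    · intro i
      rw [Walk.isPath_copy]
      rcases Fin.eq_castSucc_or_eq_last (σ.symm i) with ⟨j, hj⟩ | hj
      · rw [hj, hRcast]; exact hQ'p j
      · rw [hj, hRlast, Walk.isPath_copy]; exact hW0p
    · intro i x hx
      rw [Walk.support_copy] at hx
      rcases Fin.eq_castSucc_or_eq_last (σ.symm i) with ⟨j, hj⟩ | hj
      · rw [hj, hRcast] at hx; exact hC'sub (hQ's j x hx)
      · rw [hj, hRlast, Walk.support_copy] at hx; exact hW0s x hx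
    · intro i j hij e hei hej
      rw [Walk.edges_copy] at hei hej
      have hpq : σ.symm i ≠ σ.symm j := fun h => hij (σ.symm.injective h)
      rcases Fin.eq_castSucc_or_eq_last (σ.symm i) with ⟨i', hi'⟩ | hi' <;>
        rcases Fin.eq_castSucc_or_eq_last (σ.symm j) with ⟨j', hj'⟩ | hj'
      · rw [hi', hRcast] at hei
        rw [hj', hRcast] at hej
        have : i' ≠ j' := by
          intro h; apply hpq; rw [hi', hj', h]
        exact hQ'd i' j' this e hei hej
      · rw [hi', hRcast] at hei
        rw [hj', hRlast, Walk.edges_copy] at hej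
        exact hQ'z i' e hei (hW0z e hej)
      · rw [hi', hRlast, Walk.edges_copy] at hei
        rw [hj', hRcast] at hej
        exact hQ'z j' e hej (hW0z e hei)
      · exact hpq (hi'.trans hj'.symm)


/-- If `G` is a split graph with split partition `(C, I)`, `|C| > k`, and
every (terminal) vertex has degree at least the number of occurrences of terminal pairs
containing it, then the EDP instance is a Yes-instance. -/
theorem edp_split_large_clique_yes {V : Type*} [Fintype V] [DecidableEq V]
    (G : SimpleGraph V) [DecidableRel G.Adj]
    (C I : Finset V) (hsplit : IsSplitPartition G C I)
    {k : ℕ} (X : Fin k → V × V) (hX : ∀ i, (X i).1 ≠ (X i).2)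
    (hC : k < C.card)
    (hdeg : ∀ y : V,
      (Finset.univ.filter (fun i : Fin k => (X i).1 = y ∨ (X i).2 = y)).card ≤ G.degree y) :
    EDPYes G X := by
  classical
  obtain ⟨htot, hdisjCI, hclq, hind⟩ := hsplit
  set occ : V → Finset (Fin k) :=
    fun v => univ.filter (fun i => (X i).1 = v ∨ (X i).2 = v) with hocc
  have hcardle : ∀ v, (occ v).card ≤ (G.neighborFinset v).card := by
    intro v; rw [card_neighborFinset_eq_degree]; exact hdeg v
  have gex : ∀ v : V, ∃ gv : Fin k → V, (∀ i ∈ occ v, G.Adj v (gv i)) ∧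
      (∀ i ∈ occ v, ∀ j ∈ occ v, gv i = gv j → i = j) := by
    intro v
    let f : {x // x ∈ occ v} ↪ {x // x ∈ G.neighborFinset v} :=
      ((occ v).equivFin.toEmbedding.trans
        ⟨Fin.castLE (hcardle v), Fin.castLE_injective _⟩).trans
        (G.neighborFinset v).equivFin.symm.toEmbedding
    refine ⟨fun i => if h : i ∈ occ v then (f ⟨i, h⟩ : V) else v, ?_, ?_⟩
    · intro i hi
      simp only [dif_pos hi]
      have := (f ⟨i, hi⟩).2
      rwa [mem_neighborFinset] at this
    · intro i hi j hj hgij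
      simp only [dif_pos hi, dif_pos hj] at hgij
      have h2 := f.injective (Subtype.ext hgij)
      exact congrArg (fun x => x.1) h2
  choose g hg1 hg2 using gex
  have hmemocc1 : ∀ i, i ∈ occ ((X i).1) := by intro i; simp [hocc]
  have hmemocc2 : ∀ i, i ∈ occ ((X i).2) := by intro i; simp [hocc]
  have hIC : ∀ v, v ∉ C → v ∈ I := fun v hv => (htot v).resolve_left hv
  have hnbrC : ∀ v w, v ∉ C → G.Adj v w → w ∈ C := by
    intro v w hv hadj
    rcases htot w with h | h
    · exact h
    · exact absurd hadj (hind v (hIC v hv) w h)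
  set a : Fin k → V := fun i => if (X i).1 ∈ C then (X i).1 else g ((X i).1) i with hadef
  set b : Fin k → V := fun i => if (X i).2 ∈ C then (X i).2 else g ((X i).2) i with hbdef
  have haeq : ∀ i, (X i).1 ∈ C → a i = (X i).1 := fun i h => if_pos h
  have hbeq : ∀ i, (X i).2 ∈ C → b i = (X i).2 := fun i h => if_pos h
  have hang : ∀ i, (X i).1 ∉ C → a i = g ((X i).1) i := fun i h => if_neg h
  have hbng : ∀ i, (X i).2 ∉ C → b i = g ((X i).2) i := fun i h => if_neg h
  have haAdj : ∀ i, (X i).1 ∉ C → G.Adj ((X i).1) (a i) := by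
    intro i h; rw [hang i h]; exact hg1 _ _ (hmemocc1 i)
  have hbAdj : ∀ i, (X i).2 ∉ C → G.Adj ((X i).2) (b i) := by
    intro i h; rw [hbng i h]; exact hg1 _ _ (hmemocc2 i)
  have haC : ∀ i, a i ∈ C := by
    intro i
    by_cases h : (X i).1 ∈ C
    · rw [haeq i h]; exact h
    · exact hnbrC _ _ h (haAdj i h)
  have hbC : ∀ i, b i ∈ C := by
    intro i
    by_cases h : (X i).2 ∈ C
    · rw [hbeq i h]; exact h
    · exact hnbrC _ _ h (hbAdj i h)
  have inj_aa : ∀ i j, (X i).1 ∉ C → (X j).1 ∉ C → (X i).1 = (X j).1 → a i = a j → i = j := by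
    intro i j hi hj hv hab
    rw [hang i hi, hang j hj, hv] at hab
    have hi' : i ∈ occ ((X j).1) := by rw [← hv]; exact hmemocc1 i
    exact hg2 _ i hi' j (hmemocc1 j) hab
  have inj_bb : ∀ i j, (X i).2 ∉ C → (X j).2 ∉ C → (X i).2 = (X j).2 → b i = b j → i = j := by
    intro i j hi hj hv hab
    rw [hbng i hi, hbng j hj, hv] at hab
    have hi' : i ∈ occ ((X j).2) := by rw [← hv]; exact hmemocc2 i
    exact hg2 _ i hi' j (hmemocc2 j) hab
  have inj_ab : ∀ i j, (X i).1 ∉ C → (X j).2 ∉ C → (X i).1 = (X j).2 → a i = b j → False := by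
    intro i j hi hj hv hab
    rw [hang i hi, hbng j hj, hv] at hab
    have hi' : i ∈ occ ((X j).2) := by rw [← hv]; exact hmemocc1 i
    have hij : i = j := hg2 _ i hi' j (hmemocc2 j) hab
    subst hij
    exact hX i hv
  obtain ⟨Q, hQp, hQs, hQd⟩ := edp_clique_linkage G k C hC hclq a b haC hbC
  have EQC : ∀ (i : Fin k) (e : Sym2 V), e ∈ (Q i).edges → ∀ x, x ∈ e → x ∈ C := by
    intro i e he x hx
    induction e using Sym2.ind with
    | _ u v =>
      rw [Sym2.mem_iff] at hx
      rcases hx with rfl | rfl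
      · exact hQs i x (Walk.fst_mem_support_of_mem_edges _ he)
      · exact hQs i x (Walk.snd_mem_support_of_mem_edges _ he)
  obtain ⟨pre, hpreC, hpreI⟩ : ∃ pre : ∀ i, G.Walk ((X i).1) (a i),
      (∀ i, (X i).1 ∈ C → (pre i).edges = [] ∧ (pre i).support = [(X i).1]) ∧
      (∀ i, (X i).1 ∉ C → (pre i).edges = [s((X i).1, a i)] ∧
        (pre i).support = [(X i).1, a i]) := by
    refine ⟨fun i => if h : (X i).1 ∈ C then (Walk.nil.copy rfl (haeq i h).symm)
      else Walk.cons (haAdj i h) Walk.nil, ?_, ?_⟩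
    · intro i h; simp only [dif_pos h]; constructor <;> simp
    · intro i h; simp only [dif_neg h]; constructor <;> simp
  obtain ⟨suf, hsufC, hsufI⟩ : ∃ suf : ∀ i, G.Walk ((X i).2) (b i),
      (∀ i, (X i).2 ∈ C → (suf i).edges = [] ∧ (suf i).reverse.support.tail = []) ∧
      (∀ i, (X i).2 ∉ C → (suf i).edges = [s((X i).2, b i)] ∧
        (suf i).reverse.support.tail = [(X i).2]) := by
    refine ⟨fun i => if h : (X i).2 ∈ C then (Walk.nil.copy rfl (hbeq i h).symm)
      else Walk.cons (hbAdj i h) Walk.nil, ?_, ?_⟩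
    · intro i h; simp only [dif_pos h]; constructor <;> simp [Walk.support_reverse]
    · intro i h; simp only [dif_neg h]; constructor <;> simp [Walk.support_reverse]
  refine ⟨fun i => (pre i).append ((Q i).append (suf i).reverse), ?_, ?_⟩
  · -- each walk is a path
    intro i
    rw [Walk.isPath_def, Walk.support_append, Walk.support_append]
    have hQnd : (Q i).support.Nodup := (Walk.isPath_def _).mp (hQp i)
    have hQhead : (Q i).support = a i :: (Q i).support.tail := Walk.support_eq_cons _
    have htail : ∀ x ∈ (Q i).support.tail, x ∈ C := fun x hx =>
      hQs i x (by rw [hQhead]; exact List.mem_cons_of_mem _ hx)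
    have hQnd' : (a i :: (Q i).support.tail).Nodup := by rw [← hQhead]; exact hQnd
    have hane : a i ∉ (Q i).support.tail := (List.nodup_cons.mp hQnd').1
    have hndtail : (Q i).support.tail.Nodup := (List.nodup_cons.mp hQnd').2
    by_cases h1 : (X i).1 ∈ C <;> by_cases h2 : (X i).2 ∈ C
    · rw [(hpreC i h1).2, (hsufC i h2).2, hQhead]
      simp only [List.append_nil, List.nil_append, List.singleton_append,
        List.cons_append, List.tail_cons]
      rw [← haeq i h1] at *
      exact List.nodup_cons.mpr ⟨hane, hndtail⟩
    · rw [(hpreC i h1).2, (hsufI i h2).2, hQhead]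
      simp only [List.append_nil, List.nil_append, List.singleton_append,
        List.cons_append, List.tail_cons]
      rw [← haeq i h1] at *
      refine List.nodup_cons.mpr ⟨?_, ?_⟩
      · intro hm
        rcases List.mem_append.mp hm with hm | hm
        · exact hane hm
        · rw [List.mem_singleton] at hm
          exact h2 (hm ▸ haC i)
      · refine List.nodup_append'.mpr ⟨hndtail, List.nodup_singleton _, ?_⟩
        intro x hx hx2
        rw [List.mem_singleton] at hx2
        subst hx2
        exact h2 (htail _ hx)
    · rw [(hpreI i h1).2, (hsufC i h2).2, hQhead]
      simp only [List.append_nil, List.nil_append, List.singleton_append,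
        List.cons_append, List.tail_cons]
      refine List.nodup_cons.mpr ⟨?_, hQnd'⟩
      intro hm
      rw [← hQhead] at hm
      exact h1 (hQs i _ hm)
    · rw [(hpreI i h1).2, (hsufI i h2).2, hQhead]
      simp only [List.append_nil, List.nil_append, List.singleton_append,
        List.cons_append, List.tail_cons]
      refine List.nodup_cons.mpr ⟨?_, List.nodup_cons.mpr ⟨?_, ?_⟩⟩
      · intro hm
        rcases List.mem_cons.mp hm with hm | hm
        · exact h1 (hm ▸ haC i)
        · rcases List.mem_append.mp hm with hm | hm
          · exact h1 (htail _ hm)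
          · rw [List.mem_singleton] at hm
            exact hX i hm
      · intro hm
        rcases List.mem_append.mp hm with hm | hm
        · exact hane hm
        · rw [List.mem_singleton] at hm
          exact h2 (hm ▸ haC i)
      · refine List.nodup_append'.mpr ⟨hndtail, List.nodup_singleton _, ?_⟩
        intro x hx hx2
        rw [List.mem_singleton] at hx2
        subst hx2
        exact h2 (htail _ hx)
  · -- pairwise edge-disjoint
    intro i j hij e hei hej
    rw [Walk.edges_append, Walk.edges_append, Walk.edges_reverse, List.mem_append,
      List.mem_append, List.mem_reverse] at hei hej
    have hpe : ∀ m : Fin k, e ∈ (pre m).edges → (X m).1 ∉ C ∧ e = s((X m).1, a m) := by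
      intro m hm
      by_cases h : (X m).1 ∈ C
      · rw [(hpreC m h).1] at hm; exact absurd hm List.not_mem_nil
      · rw [(hpreI m h).1, List.mem_singleton] at hm; exact ⟨h, hm⟩
    have hse : ∀ m : Fin k, e ∈ (suf m).edges → (X m).2 ∉ C ∧ e = s((X m).2, b m) := by
      intro m hm
      by_cases h : (X m).2 ∈ C
      · rw [(hsufC m h).1] at hm; exact absurd hm List.not_mem_nil
      · rw [(hsufI m h).1, List.mem_singleton] at hm; exact ⟨h, hm⟩
    rcases hei with h1 | (h2 | h3)
    · obtain ⟨hi1, he1⟩ := hpe i h1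
      rcases hej with g1 | (g2 | g3)
      · obtain ⟨hj1, he2⟩ := hpe j g1
        rw [he1] at he2
        rw [Sym2.eq_iff] at he2
        rcases he2 with ⟨hss, haa⟩ | ⟨hsa, has⟩
        · exact hij (inj_aa i j hi1 hj1 hss haa)
        · exact hi1 (hsa ▸ haC j)
      · refine hi1 (EQC j e g2 ((X i).1) ?_)
        rw [he1]; exact Sym2.mem_mk_left _ _
      · obtain ⟨hj1, he2⟩ := hse j g3
        rw [he1] at he2
        rw [Sym2.eq_iff] at he2
        rcases he2 with ⟨hst, hab⟩ | ⟨hsb, has⟩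
        · exact inj_ab i j hi1 hj1 hst hab
        · exact hi1 (hsb ▸ hbC j)
    · rcases hej with g1 | (g2 | g3)
      · obtain ⟨hj1, he2⟩ := hpe j g1
        refine hj1 (EQC i e h2 ((X j).1) ?_)
        rw [he2]; exact Sym2.mem_mk_left _ _
      · exact hQd i j hij e h2 g2
      · obtain ⟨hj1, he2⟩ := hse j g3
        refine hj1 (EQC i e h2 ((X j).2) ?_)
        rw [he2]; exact Sym2.mem_mk_left _ _
    · obtain ⟨hi1, he1⟩ := hse i h3
      rcases hej with g1 | (g2 | g3)
      · obtain ⟨hj1, he2⟩ := hpe j g1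
        rw [he1] at he2
        rw [Sym2.eq_iff] at he2
        rcases he2 with ⟨hts, hba⟩ | ⟨hta, hbs⟩
        · exact inj_ab j i hj1 hi1 hts.symm hba.symm
        · exact hi1 (hta ▸ haC j)
      · refine hi1 (EQC j e g2 ((X i).2) ?_)
        rw [he1]; exact Sym2.mem_mk_left _ _
      · obtain ⟨hj1, he2⟩ := hse j g3
        rw [he1] at he2
        rw [Sym2.eq_iff] at he2
        rcases he2 with ⟨htt, hbb⟩ | ⟨htb, hbt⟩
        · exact hij (inj_bb i j hi1 hj1 htt hbb)
        · exact hi1 (htb ▸ hbC j)
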